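/- Let n ≥ 2 and let a_1, …, a_n be complex numbers with ∏_{i=1}^n a_i = 1, and let p(X) = ∏_{i=1}^n (X − a_i). Then ℓ(p) = 2·√(2/n)·log(M(p)) holds if and only if there exists a real number r > 0 such that for every i, either |a_i| = r or |a_i| = r^{-1}. -/

import Mathlib

/-- Equality case of Cauchy–Schwarz with the all-ones vector. -/
lemma key_cs (n : ℕ) (y : Fin n → ℝ) :
    (n : ℝ) * ∑ i, (y i) ^ 2 = (∑ i, y i) ^ 2 ↔ ∀ i j, y i = y j := by
  have hid : ∑ i, ∑ j, (y i - y j) ^ 2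
      = 2 * ((n : ℝ) * ∑ i, (y i) ^ 2 - (∑ i, y i) ^ 2) := by
    have h1 : ∀ i : Fin n, ∑ j, (y i - y j) ^ 2
        = (n : ℝ) * (y i) ^ 2 - 2 * (y i) * (∑ j, y j) + ∑ j, (y j) ^ 2 := by
      intro i
      have h2 : ∀ j : Fin n, (y i - y j) ^ 2
          = (y i) ^ 2 - 2 * (y i) * (y j) + (y j) ^ 2 := fun j => by ring
      simp only [h2]
      rw [Finset.sum_add_distrib, Finset.sum_sub_distrib, ← Finset.mul_sum,
        Finset.sum_const, Finset.card_univ, Fintype.card_fin, nsmul_eq_mul]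
    simp only [h1]
    rw [Finset.sum_add_distrib, Finset.sum_sub_distrib, ← Finset.sum_mul,
      Finset.sum_const, Finset.card_univ, Fintype.card_fin, nsmul_eq_mul,
      ← Finset.mul_sum, ← Finset.mul_sum]
    ring
  constructor
  · intro h i j
    have h0 : ∑ i, ∑ j, (y i - y j) ^ 2 = 0 := by rw [hid, h]; ring
    have hz := (Finset.sum_eq_zero_iff_of_nonneg
      (fun i _ => Finset.sum_nonneg fun j _ => sq_nonneg _)).mp h0 i (Finset.mem_univ i)
    have hz2 := (Finset.sum_eq_zero_iff_of_nonneg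
      (fun j _ => sq_nonneg _)).mp hz j (Finset.mem_univ j)
    have := (pow_eq_zero_iff two_ne_zero).mp hz2
    linarith [sub_eq_zero.mp this]
  · intro h
    by_cases hn : n = 0
    · subst hn; simp
    have i0 : Fin n := ⟨0, Nat.pos_of_ne_zero hn⟩
    have hy : ∀ i, y i = y i0 := fun i => h i i0
    calc (n : ℝ) * ∑ i, (y i) ^ 2 = (n : ℝ) * ∑ _i : Fin n, (y i0) ^ 2 := by
          congr 1; exact Finset.sum_congr rfl fun i _ => by rw [hy i]
      _ = (n : ℝ) ^ 2 * (y i0) ^ 2 := by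
          rw [Finset.sum_const, Finset.card_univ, Fintype.card_fin, nsmul_eq_mul]; ring
      _ = (∑ i, y i) ^ 2 := by
          rw [Finset.sum_congr rfl fun i (_ : i ∈ Finset.univ) => hy i,
            Finset.sum_const, Finset.card_univ, Fintype.card_fin, nsmul_eq_mul]; ring

/-- The real-variable core of the equality case. -/
lemma real_key (n : ℕ) (hn : 2 ≤ n) (x : Fin n → ℝ) (hsum : ∑ i, x i = 0) :
    Real.sqrt (∑ i, 2 * (x i) ^ 2) = 2 * Real.sqrt (2 / n) * ((∑ i, |x i|) / 2) ↔
    ∀ i j, |x i| = |x j| := by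
  have hnpos : (0 : ℝ) < n := by positivity
  have hn0 : (n : ℝ) ≠ 0 := hnpos.ne'
  have hS : (0 : ℝ) ≤ ∑ i, |x i| := Finset.sum_nonneg fun i _ => abs_nonneg _
  have lhs_eq : ∑ i, 2 * (x i) ^ 2 = 2 * ∑ i, |x i| ^ 2 := by
    rw [Finset.mul_sum]; exact Finset.sum_congr rfl fun i _ => by rw [sq_abs]
  have rhs_eq : 2 * Real.sqrt (2 / n) * ((∑ i, |x i|) / 2)
      = Real.sqrt ((2 / n) * (∑ i, |x i|) ^ 2) := by
    rw [Real.sqrt_mul (by positivity), Real.sqrt_sq hS]; ring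
  have hiff : (2 : ℝ) * ∑ i, |x i| ^ 2 = 2 / n * (∑ i, |x i|) ^ 2 ↔
      (n : ℝ) * ∑ i, |x i| ^ 2 = (∑ i, |x i|) ^ 2 := by
    rw [div_mul_eq_mul_div, eq_div_iff hn0]
    constructor <;> intro h
    · linear_combination h / 2
    · linear_combination 2 * h
  rw [lhs_eq, rhs_eq, Real.sqrt_inj (by positivity) (by positivity), hiff]
  exact key_cs n fun i => |x i|

/-- Equality case of the lower Mahler–Length bound: `ℓ(p) = 2 √(2/n) log M(p)` iff there is
`r > 0` such that every root modulus equals `r` or `r⁻¹`. -/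
theorem stmt_1 (n : ℕ) (hn : 2 ≤ n) (a : Fin n → ℂ) (ha : ∏ i, a i = 1) :
    Real.sqrt (∑ i, 2 * (Real.log (‖a i‖)) ^ 2) =
      2 * Real.sqrt (2 / n) * Real.log (∏ i, max 1 (‖a i‖)) ↔
    ∃ r : ℝ, 0 < r ∧ ∀ i, ‖a i‖ = r ∨ ‖a i‖ = r⁻¹ := by
  have h0 : ∀ i, a i ≠ 0 := by
    intro i hi
    have : (∏ i, a i) = 0 := Finset.prod_eq_zero (Finset.mem_univ i) hi
    rw [ha] at this; exact one_ne_zero this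
  have habs : ∀ i, 0 < ‖a i‖ := fun i => norm_pos_iff.mpr (h0 i)
  have hsum0 : ∑ i, Real.log (‖a i‖) = 0 := by
    rw [← Real.log_prod (fun i _ => (habs i).ne'), ← norm_prod, ha, norm_one,
      Real.log_one]
  have hM : Real.log (∏ i, max 1 (‖a i‖))
      = (∑ i, |Real.log (‖a i‖)|) / 2 := by
    rw [Real.log_prod (fun i _ => by positivity)]
    have h1 : ∀ i : Fin n, Real.log (max 1 (‖a i‖))
        = (Real.log (‖a i‖) + |Real.log (‖a i‖)|) / 2 := by
      intro i
      rcases le_total (‖a i‖) 1 with h | h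
      · rw [max_eq_left h]
        have hl : Real.log (‖a i‖) ≤ 0 := Real.log_nonpos (habs i).le h
        rw [abs_of_nonpos hl, Real.log_one]; ring
      · rw [max_eq_right h]
        have hl : 0 ≤ Real.log (‖a i‖) := Real.log_nonneg h
        rw [abs_of_nonneg hl]; ring
    simp only [h1]
    rw [← Finset.sum_div, Finset.sum_add_distrib, hsum0, zero_add]
  rw [hM, real_key n hn _ hsum0]
  have hexp : ∀ i, ‖a i‖
      = Real.exp (Real.log (‖a i‖)) := fun i => (Real.exp_log (habs i)).symm
  constructor
  · intro h
    have i0 : Fin n := ⟨0, by omega⟩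
    refine ⟨Real.exp |Real.log (‖a i0‖)|, Real.exp_pos _, fun i => ?_⟩
    rcases (abs_eq (abs_nonneg _)).mp (h i i0) with h1 | h1
    · left; rw [hexp i, h1]
    · right; rw [hexp i, h1, Real.exp_neg]
  · rintro ⟨r, hr, hri⟩ i j
    have key : ∀ k, |Real.log (‖a k‖)| = |Real.log r| := by
      intro k
      rcases hri k with h | h
      · rw [h]
      · rw [h, Real.log_inv, abs_neg]
    rw [key i, key j]
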